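/- For every integer r ≥ 3 and every integer s ≥ 2, the function φ_r is concave on the open interval ((s−1)/(2s), s/(2(s+1))). -/

import Mathlib

/-- `ξ(c) = ⌈1/(1 - 2c)⌉`. -/
noncomputable def xi (c : ℝ) : ℕ := ⌈1 / (1 - 2 * c)⌉₊

/-- `√(1 - 2 ξ(c) c / (ξ(c) - 1))`. -/
noncomputable def sqc (c : ℝ) : ℝ :=
  Real.sqrt (1 - 2 * (xi c : ℝ) * c / ((xi c : ℝ) - 1))

/-- The large coordinate `x` of the optimal vector `x_c`. -/
noncomputable def xval (c : ℝ) : ℝ := 1 / (xi c : ℝ) + (1 / (xi c : ℝ)) * sqc c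

/-- The small coordinate `y` of the optimal vector `x_c`. -/
noncomputable def yval (c : ℝ) : ℝ :=
  1 / (xi c : ℝ) - (((xi c : ℝ) - 1) / (xi c : ℝ)) * sqc c

/-- `φ_r(c) = C(s-1, r) x^r + C(s-1, r-1) x^{r-1} y` where `s = ξ(c)`. -/
noncomputable def phiF (r : ℕ) (c : ℝ) : ℝ :=
  ((xi c - 1).choose r : ℝ) * xval c ^ r +
    ((xi c - 1).choose (r - 1) : ℝ) * xval c ^ (r - 1) * yval c

noncomputable def Tf (s : ℕ) (c : ℝ) : ℝ := Real.sqrt (1 - 2 * ((s : ℝ) + 1) * c / s)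

noncomputable def Ff (s r : ℕ) (c : ℝ) : ℝ :=
  (s.choose r : ℝ) * ((1 + Tf s c) / ((s : ℝ) + 1)) ^ r +
    (s.choose (r - 1) : ℝ) * ((1 + Tf s c) / ((s : ℝ) + 1)) ^ (r - 1) *
      ((1 - (s : ℝ) * Tf s c) / ((s : ℝ) + 1))

lemma Ff_hasDerivAt (s m : ℕ) (hs : 2 ≤ s) {c : ℝ}
    (hc : c ∈ Set.Ioo (((s : ℝ) - 1) / (2 * s)) ((s : ℝ) / (2 * ((s : ℝ) + 1)))) :
    HasDerivAt (Ff s (m + 3))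
      ((s.choose (m + 2) : ℝ) * (m + 2) / ((s : ℝ) * ((s : ℝ) + 1) ^ (m + 1))
        * (1 + Tf s c) ^ (m + 1)) c := by
  have hs0 : (0 : ℝ) < s := by exact_mod_cast Nat.lt_of_lt_of_le two_pos hs |>.trans_le le_rfl
  have hσ : (0 : ℝ) < (s : ℝ) + 1 := by linarith
  have hu : (0 : ℝ) < 1 - 2 * ((s : ℝ) + 1) * c / s := by
    rw [sub_pos, div_lt_one hs0]
    have h2 := (lt_div_iff₀ (by positivity : (0:ℝ) < 2 * ((s:ℝ)+1))).1 hc.2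
    nlinarith [h2]
  have ht : 0 < Tf s c := Real.sqrt_pos.2 hu
  set t := Tf s c with htdef
  have h1 : HasDerivAt (fun c : ℝ => 1 - 2 * ((s : ℝ) + 1) * c / s)
      (-(2 * ((s : ℝ) + 1) / s)) c := by
    simpa using (((hasDerivAt_id c).const_mul (2 * ((s : ℝ) + 1))).div_const (s : ℝ)).const_sub 1
  have hT : HasDerivAt (Tf s) (-(((s : ℝ) + 1) / (s * t))) c := by
    have h2 := (Real.hasDerivAt_sqrt hu.ne').comp c h1
    have ht2 : t = Real.sqrt (1 - 2 * ((s : ℝ) + 1) * c / s) := rfl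
    refine h2.congr_deriv ?_
    rw [← ht2]
    field_simp
  have hX : HasDerivAt (fun c => (1 + Tf s c) / ((s : ℝ) + 1))
      (-(((s : ℝ) + 1) / (s * t)) / ((s : ℝ) + 1)) c := (hT.const_add 1).div_const _
  have hY : HasDerivAt (fun c => (1 - (s : ℝ) * Tf s c) / ((s : ℝ) + 1))
      (-((s : ℝ) * -(((s : ℝ) + 1) / (s * t))) / ((s : ℝ) + 1)) c :=
    ((hT.const_mul (s : ℝ)).const_sub 1).div_const _
  have hF := ((hX.pow (m + 3)).const_mul (s.choose (m + 3) : ℝ)).add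
    ((((hX.pow (m + 2)).const_mul (s.choose (m + 2) : ℝ)).mul hY))
  have hFf : Ff s (m + 3) = fun c =>
      (s.choose (m + 3) : ℝ) * ((1 + Tf s c) / ((s : ℝ) + 1)) ^ (m + 3) +
        (s.choose (m + 2) : ℝ) * ((1 + Tf s c) / ((s : ℝ) + 1)) ^ (m + 2) *
          ((1 - (s : ℝ) * Tf s c) / ((s : ℝ) + 1)) := by
    funext c; simp [Ff]
  rw [hFf]
  have hAB : (s.choose (m + 3) : ℝ) * (m + 3) = (s.choose (m + 2) : ℝ) * ((s : ℝ) - (m + 2)) := by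
    rcases le_or_gt (m + 2) s with h | h
    · have h2 := Nat.choose_succ_right_eq s (m + 2)
      zify [h] at h2
      exact_mod_cast h2
    · rw [Nat.choose_eq_zero_of_lt h, Nat.choose_eq_zero_of_lt (by omega)]; simp
  refine hF.congr_deriv ?_
  simp only [Pi.pow_apply, ← htdef, Nat.cast_add, Nat.cast_ofNat]
  have hA : (s.choose (m + 3) : ℝ) = (s.choose (m + 2) : ℝ) * ((s : ℝ) - (m + 2)) / (m + 3) := by
    field_simp; linarith [hAB]
  rw [hA]
  simp only [show m + 3 - 1 = m + 2 from rfl, show m + 2 - 1 = m + 1 from rfl]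
  simp only [div_pow]
  field_simp
  ring

lemma Ff_concave (s m : ℕ) (hs : 2 ≤ s) :
    ConcaveOn ℝ (Set.Ioo (((s : ℝ) - 1) / (2 * s)) ((s : ℝ) / (2 * ((s : ℝ) + 1))))
      (Ff s (m + 3)) := by
  have hs0 : (0 : ℝ) < s := by positivity
  have hder : ∀ c ∈ Set.Ioo (((s : ℝ) - 1) / (2 * s)) ((s : ℝ) / (2 * ((s : ℝ) + 1))),
      HasDerivAt (Ff s (m + 3))
        ((s.choose (m + 2) : ℝ) * (m + 2) / ((s : ℝ) * ((s : ℝ) + 1) ^ (m + 1))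
          * (1 + Tf s c) ^ (m + 1)) c := fun c hc => Ff_hasDerivAt s m hs hc
  apply AntitoneOn.concaveOn_of_deriv (convex_Ioo _ _)
  · exact fun c hc => (hder c hc).continuousAt.continuousWithinAt
  · rw [interior_Ioo]
    exact fun c hc => (hder c hc).differentiableAt.differentiableWithinAt
  · rw [interior_Ioo]
    intro c1 h1 c2 h2 h12
    rw [(hder c1 h1).deriv, (hder c2 h2).deriv]
    have hmono : Tf s c2 ≤ Tf s c1 := by
      apply Real.sqrt_le_sqrt
      have : 2 * ((s : ℝ) + 1) * c1 / s ≤ 2 * ((s : ℝ) + 1) * c2 / s := by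
        gcongr
      linarith
    have h0 : (0 : ℝ) ≤ 1 + Tf s c2 :=
      add_nonneg zero_le_one (Real.sqrt_nonneg _)
    have := pow_le_pow_left₀ h0 (by linarith : 1 + Tf s c2 ≤ 1 + Tf s c1) (m + 1)
    have hK : (0 : ℝ) ≤ (s.choose (m + 2) : ℝ) * (m + 2) / ((s : ℝ) * ((s : ℝ) + 1) ^ (m + 1)) := by
      positivity
    exact mul_le_mul_of_nonneg_left this hK

lemma xi_eq (s : ℕ) (hs : 2 ≤ s) {c : ℝ}
    (hc : c ∈ Set.Ioo (((s : ℝ) - 1) / (2 * s)) ((s : ℝ) / (2 * ((s : ℝ) + 1)))) :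
    xi c = s + 1 := by
  have hs0 : (0 : ℝ) < s := by positivity
  have hσ : (0 : ℝ) < (s : ℝ) + 1 := by linarith
  have hca := (div_lt_iff₀ (by positivity : (0:ℝ) < 2 * (s:ℝ))).1 hc.1
  have hcb := (lt_div_iff₀ (by positivity : (0:ℝ) < 2 * ((s:ℝ)+1))).1 hc.2
  have h2c : (0 : ℝ) < 1 - 2 * c := by nlinarith
  rw [xi, Nat.ceil_eq_iff (by omega : s + 1 ≠ 0)]
  constructor
  · have : (↑(s + 1 - 1) : ℝ) = (s : ℝ) := by
      rw [Nat.add_sub_cancel]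
    rw [this, lt_div_iff₀ h2c]
    nlinarith
  · rw [div_le_iff₀ h2c]
    push_cast
    nlinarith

lemma phiF_eq_Ff (s r : ℕ) (hs : 2 ≤ s) {c : ℝ}
    (hc : c ∈ Set.Ioo (((s : ℝ) - 1) / (2 * s)) ((s : ℝ) / (2 * ((s : ℝ) + 1)))) :
    phiF r c = Ff s r c := by
  have hσ : (0 : ℝ) < (s : ℝ) + 1 := by positivity
  have hxi := xi_eq s hs hc
  have hcast : ((xi c : ℕ) : ℝ) = (s : ℝ) + 1 := by rw [hxi]; push_cast; ring
  have harg : 1 - 2 * (xi c : ℝ) * c / ((xi c : ℝ) - 1) = 1 - 2 * ((s : ℝ) + 1) * c / s := by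
    rw [hcast]; ring_nf
  have hsub : xi c - 1 = s := by omega
  have hsqc : sqc c = Tf s c := by rw [sqc, Tf, harg]
  rw [phiF, Ff, xval, yval, hsqc, hcast, hsub]
  have hTnn := Real.sqrt_nonneg (1 - 2 * ((s : ℝ) + 1) * c / s)
  set T := Tf s c with hT
  have e1 : 1 / ((s : ℝ) + 1) + 1 / ((s : ℝ) + 1) * T = (1 + T) / ((s : ℝ) + 1) := by
    field_simp
  have e2 : 1 / ((s : ℝ) + 1) - ((s : ℝ) + 1 - 1) / ((s : ℝ) + 1) * T
      = (1 - (s : ℝ) * T) / ((s : ℝ) + 1) := by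
    field_simp
    ring
  rw [e1, e2]

lemma concaveOn_congr_aux {S : Set ℝ} {f g : ℝ → ℝ} (hf : ConcaveOn ℝ S f)
    (h : ∀ x ∈ S, g x = f x) : ConcaveOn ℝ S g := by
  refine ⟨hf.1, fun x hx y hy a b ha hb hab => ?_⟩
  rw [h x hx, h y hy, h _ (hf.1 hx hy ha hb hab)]
  exact hf.2 hx hy ha hb hab

theorem phiF_concave (r : ℕ) (hr : 3 ≤ r) (s : ℕ) (hs : 2 ≤ s) :
    ConcaveOn ℝ (Set.Ioo (((s : ℝ) - 1) / (2 * (s : ℝ))) ((s : ℝ) / (2 * ((s : ℝ) + 1))))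
      (phiF r) := by
  obtain ⟨m, rfl⟩ : ∃ m, r = m + 3 := ⟨r - 3, by omega⟩
  exact concaveOn_congr_aux (Ff_concave s m hs) (fun c hc => phiF_eq_Ff s (m + 3) hs hc)
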